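/- For every weighted digraph D on a finite vertex set V, (mac(UG(D))/2 + r⁺(D))/2 ≤ mac(D) ≤ (mac(UG(D)) + r⁺(D))/2. -/
import Mathlib


open scoped BigOperators Classical

noncomputable section

namespace PaperStmt

variable {V : Type*} [Fintype V]

/-- Total weight of a weighted digraph given by `w : V → V → ℝ`. -/
def totalWeight (w : V → V → ℝ) : ℝ := ∑ u, ∑ v, w u v

/-- Weight of the dicut `(X, Xᶜ)`. -/
def cutWeight (w : V → V → ℝ) (X : Finset V) : ℝ := ∑ x ∈ X, ∑ y ∈ Xᶜ, w x y

/-- Maximum weight of a directed cut. -/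
def mac (w : V → V → ℝ) : ℝ :=
  Finset.univ.sup' ⟨∅, Finset.mem_univ ∅⟩ (fun X : Finset V => cutWeight w X)

/-- `r(v) = w⁺(v) - w⁻(v)`. -/
def rv (w : V → V → ℝ) (v : V) : ℝ := (∑ u, w v u) - (∑ u, w u v)

/-- `r⁺(D) = ∑_{v : r(v) > 0} r(v)`. -/
def rPlus (w : V → V → ℝ) : ℝ :=
  ∑ v ∈ Finset.univ.filter (fun v => 0 < rv w v), rv w v

/-- Maximum weight of a cut in the underlying weighted graph `UG(D)`,
where the edge `{x,y}` has weight `w x y + w y x`. -/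
def macUG (w : V → V → ℝ) : ℝ :=
  Finset.univ.sup' ⟨∅, Finset.mem_univ ∅⟩
    (fun X : Finset V => ∑ x ∈ X, ∑ y ∈ Xᶜ, (w x y + w y x))

lemma cutWeight_compl (w : V → V → ℝ) (X : Finset V) :
    cutWeight w Xᶜ = ∑ x ∈ X, ∑ y ∈ Xᶜ, w y x := by
  unfold cutWeight
  rw [compl_compl, Finset.sum_comm]

lemma sum_rv_eq (w : V → V → ℝ) (X : Finset V) :
    ∑ x ∈ X, rv w x = cutWeight w X - cutWeight w Xᶜ := by
  rw [cutWeight_compl]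
  unfold rv cutWeight
  have h1 : ∀ x : V, ∑ u, w x u = ∑ u ∈ X, w x u + ∑ u ∈ Xᶜ, w x u := by
    intro x; rw [Finset.sum_add_sum_compl]
  have h2 : ∀ x : V, ∑ u, w u x = ∑ u ∈ X, w u x + ∑ u ∈ Xᶜ, w u x := by
    intro x; rw [Finset.sum_add_sum_compl]
  simp only [h1, h2]
  rw [Finset.sum_sub_distrib, Finset.sum_add_distrib, Finset.sum_add_distrib]
  have : ∑ x ∈ X, ∑ u ∈ X, w x u = ∑ x ∈ X, ∑ u ∈ X, w u x := Finset.sum_comm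
  linarith

lemma sum_rv_le_rPlus (w : V → V → ℝ) (X : Finset V) :
    ∑ x ∈ X, rv w x ≤ rPlus w := by
  classical
  have h1 : ∑ x ∈ X, rv w x ≤ ∑ x ∈ X.filter (fun v => 0 < rv w v), rv w x := by
    rw [← Finset.sum_filter_add_sum_filter_not X (fun v => 0 < rv w v)]
    have : ∑ x ∈ X.filter (fun v => ¬ 0 < rv w v), rv w x ≤ 0 := by
      apply Finset.sum_nonpos
      intro i hi
      simp only [Finset.mem_filter, not_lt] at hi
      exact hi.2
    linarith
  refine h1.trans ?_
  apply Finset.sum_le_sum_of_subset_of_nonneg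
  · intro x hx
    simp only [Finset.mem_filter, Finset.mem_univ, true_and] at *
    exact hx.2
  · intro i hi _
    exact le_of_lt (Finset.mem_filter.mp hi).2

theorem macUG_rPlus_bounds {V : Type*} [Fintype V] [Nonempty V]
    (w : V → V → ℝ) (hnn : ∀ u v, 0 ≤ w u v) (hdiag : ∀ v, w v v = 0) :
    (macUG w / 2 + rPlus w) / 2 ≤ mac w ∧ mac w ≤ (macUG w + rPlus w) / 2 := by
  classical
  have hne : (Finset.univ : Finset (Finset V)).Nonempty := ⟨∅, Finset.mem_univ ∅⟩
  have hUG : ∀ X : Finset V,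
      ∑ x ∈ X, ∑ y ∈ Xᶜ, (w x y + w y x) = cutWeight w X + cutWeight w Xᶜ := by
    intro X
    rw [cutWeight_compl]
    unfold cutWeight
    rw [← Finset.sum_add_distrib]
    refine Finset.sum_congr rfl fun x _ => ?_
    rw [← Finset.sum_add_distrib]
  have hle : ∀ X : Finset V, cutWeight w X ≤ mac w := fun X =>
    Finset.le_sup' (fun X : Finset V => cutWeight w X) (Finset.mem_univ X)
  -- rPlus ≤ mac
  have hP : rPlus w ≤ mac w := by
    set P := Finset.univ.filter (fun v => 0 < rv w v)
    have h1 : rPlus w = cutWeight w P - cutWeight w Pᶜ := sum_rv_eq w P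
    have h2 : 0 ≤ cutWeight w Pᶜ :=
      Finset.sum_nonneg fun x _ => Finset.sum_nonneg fun y _ => hnn x y
    have := hle P
    linarith
  -- macUG ≤ 2 * mac
  have hUGle : macUG w ≤ 2 * mac w := by
    apply Finset.sup'_le
    intro X _
    rw [hUG X]
    have := hle X
    have := hle Xᶜ
    linarith
  constructor
  · linarith
  · apply Finset.sup'_le
    intro X _
    have h1 : ∑ x ∈ X, ∑ y ∈ Xᶜ, (w x y + w y x) ≤ macUG w := by
      exact Finset.le_sup' (fun X : Finset V => ∑ x ∈ X, ∑ y ∈ Xᶜ, (w x y + w y x)) (Finset.mem_univ X)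
    rw [hUG X] at h1
    have h2 : cutWeight w X - cutWeight w Xᶜ ≤ rPlus w := by
      rw [← sum_rv_eq]; exact sum_rv_le_rPlus w X
    linarith

end PaperStmt
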